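/- Consider the signed grammar G over the alphabet {a, b} with nonterminals {S, A}, start symbol S, and productions S → aSa, S → bSb, S → a, S → b, S → −A, A → −abAba, A → a (productions written with a minus sign carry sign −1, the others sign +1). Then G is admissible and generates the language L consisting of exactly those odd-length palindromes w over {a, b} such that either the central letter of w is b, or the central letter of w is a and the largest m ≥ 0 for which (ab)^m a (ba)^m occurs as the central factor of w (i.e., w = u (ab)^m a (ba)^m u^R for some word u) is odd. -/

import Mathlib

/-- A parse-tree node: either a terminal leaf or an internal node labeled by a
nonterminal with a list of children. -/
inductive PTree (N : Type) (T : Type) : Type where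
  | leaf (t : T) : PTree N T
  | node (A : N) (children : List (PTree N T)) : PTree N T

namespace PTree

variable {N T : Type}

/-- The symbol (nonterminal or terminal) labeling the root of a tree. -/
def toSymbol : PTree N T → N ⊕ T
  | leaf t => Sum.inr t
  | node A _ => Sum.inl A

/-- The yield of a parse tree: the word spelled by its leaves. -/
def yield : PTree N T → List T
  | leaf t => [t]
  | node _ cs => cs.attach.flatMap (fun c => yield c.1)
decreasing_by simp only [PTree.node.sizeOf_spec]; have h := List.sizeOf_lt_of_mem c.2; omega

/-- The sign of a parse tree w.r.t. a sign assignment on productions: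
the product of the signs of the productions used at its nodes. -/
def sign (σ : N × List (N ⊕ T) → ℤ) : PTree N T → ℤ
  | leaf _ => 1
  | node A cs => σ (A, cs.map toSymbol) * (cs.attach.map (fun c => sign σ c.1)).prod
decreasing_by simp only [PTree.node.sizeOf_spec]; have h := List.sizeOf_lt_of_mem c.2; omega

/-- Validity of a parse tree w.r.t. a set of productions: at every internal node,
the node label together with the list of symbols of its children is a production. -/
inductive Valid (R : Set (N × List (N ⊕ T))) : PTree N T → Prop where
  | leaf (t : T) : Valid R (PTree.leaf t)
  | node (A : N) (cs : List (PTree N T)) :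
      (A, cs.map toSymbol) ∈ R → (∀ c ∈ cs, Valid R c) → Valid R (PTree.node A cs)

end PTree

/-- A signed grammar over a (finite) terminal alphabet `T`: a context-free grammar
with finitely many nonterminals and productions, together with a sign `1` or `-1`
attached to each production. -/
structure SignedGrammar (T : Type) : Type 1 where
  /-- the type of nonterminals -/
  N : Type
  finN : Finite N
  /-- the start symbol -/
  start : N
  /-- the productions `A → α`, `α ∈ (N ∪ T)*` -/
  rules : Set (N × List (N ⊕ T))
  finRules : rules.Finite
  /-- the sign of each production -/
  sign : N × List (N ⊕ T) → ℤ
  sign_valid : ∀ r ∈ rules, sign r = 1 ∨ sign r = -1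

namespace SignedGrammar

variable {T : Type}

/-- A parse tree over the grammar: a valid tree whose root is labeled by the start symbol. -/
def IsParseTree (G : SignedGrammar T) (t : PTree G.N T) : Prop :=
  PTree.Valid G.rules t ∧ t.toSymbol = Sum.inl G.start

/-- The set of parse trees over `G` with yield `w`. -/
def parseTreesOf (G : SignedGrammar T) (w : List T) : Set (PTree G.N T) :=
  {t | G.IsParseTree t ∧ t.yield = w}

/-- `G` is admissible if every word has only finitely many parse trees. -/
def Admissible (G : SignedGrammar T) : Prop :=
  ∀ w : List T, (G.parseTreesOf w).Finite

/-- `n_w(G)`: the sum of the signs of all parse trees over `G` with yield `w`. -/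
noncomputable def count (G : SignedGrammar T) (w : List T) : ℤ :=
  ∑ᶠ t ∈ G.parseTreesOf w, t.sign G.sign

/-- `G` generates the language `L` if `G` is admissible, `n_w(G) = 1` for every
`w ∈ L` and `n_w(G) = 0` for every `w ∉ L`. -/
def Generates (G : SignedGrammar T) (L : Language T) : Prop :=
  G.Admissible ∧ (∀ w ∈ L, G.count w = 1) ∧ (∀ w ∉ L, G.count w = 0)

/-- An ordinary context-free grammar: every production has sign `+1`. -/
def Ordinary (G : SignedGrammar T) : Prop :=
  ∀ r ∈ G.rules, G.sign r = 1

/-- The language generated by `G` in the usual sense: all yields of parse trees. -/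
def language (G : SignedGrammar T) : Language T :=
  {w | ∃ t : PTree G.N T, G.IsParseTree t ∧ t.yield = w}

/-- `G` is unambiguous if every word has at most one parse tree. -/
def Unambiguous (G : SignedGrammar T) : Prop :=
  ∀ t₁ t₂ : PTree G.N T, G.IsParseTree t₁ → G.IsParseTree t₂ →
    t₁.yield = t₂.yield → t₁ = t₂

/-- The number of parse trees of `G` with yield `w` (degree of ambiguity of `w`). -/
noncomputable def ambCount (G : SignedGrammar T) (w : List T) : ℕ :=
  Nat.card {t : PTree G.N T // t ∈ G.parseTreesOf w}

end SignedGrammar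


/-- The two-letter alphabet `{a, b}`. -/
inductive AB : Type
  | a
  | b
deriving DecidableEq

instance instFintypeAB : Fintype AB :=
  ⟨{AB.a, AB.b}, fun x => by cases x <;> simp⟩

/-- Nonterminals `{S, A}`. -/
inductive NT14 : Type
  | S
  | A
deriving DecidableEq

instance instFintypeNT14 : Fintype NT14 :=
  ⟨{NT14.S, NT14.A}, fun x => by cases x <;> simp⟩

open AB

/-- The signed grammar over `{a, b}` with productions
`S → aSa | bSb | a | b | -A`, `A → -abAba | a`, where productions written with
a minus sign have sign `-1` and the others sign `+1`. -/
def G14 : SignedGrammar AB where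
  N := NT14
  finN := inferInstance
  start := NT14.S
  rules := {(NT14.S, [Sum.inr a, Sum.inl NT14.S, Sum.inr a]),
            (NT14.S, [Sum.inr b, Sum.inl NT14.S, Sum.inr b]),
            (NT14.S, [Sum.inr a]),
            (NT14.S, [Sum.inr b]),
            (NT14.S, [Sum.inl NT14.A]),
            (NT14.A, [Sum.inr a, Sum.inr b, Sum.inl NT14.A, Sum.inr b, Sum.inr a]),
            (NT14.A, [Sum.inr a])}
  finRules := Set.Finite.insert _ (Set.Finite.insert _ (Set.Finite.insert _
    (Set.Finite.insert _ (Set.Finite.insert _ (Set.Finite.insert _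
    (Set.finite_singleton _))))))
  sign := fun r =>
    if r = (NT14.S, [Sum.inl NT14.A]) ∨
       r = (NT14.A, [Sum.inr a, Sum.inr b, Sum.inl NT14.A, Sum.inr b, Sum.inr a])
    then -1 else 1
  sign_valid := by
    intro r _
    split
    · exact Or.inr rfl
    · exact Or.inl rfl

/-- The central factor `(ab)^m a (ba)^m`. -/
def centralFactor (m : ℕ) : List AB :=
  (List.replicate m [a, b]).flatten ++ [a] ++ (List.replicate m [b, a]).flatten


namespace G14proof
open AB NT14 PTree
set_option linter.constructorNameAsVariable false

lemma yield_node (X : NT14) (cs : List (PTree NT14 AB)) :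
    (PTree.node X cs).yield = cs.flatMap PTree.yield := by
  rw [PTree.yield, List.flatMap, List.flatMap, List.attach_map_val (l := cs) (f := PTree.yield)]

lemma sign_node (σ : NT14 × List (NT14 ⊕ AB) → ℤ) (X : NT14) (cs : List (PTree NT14 AB)) :
    (PTree.node X cs).sign σ = σ (X, cs.map PTree.toSymbol) * (cs.map (PTree.sign σ)).prod := by
  rw [PTree.sign, List.attach_map_val (l := cs) (f := PTree.sign σ)]

/-- The `A`-tree with `k` nested uses of `A → abAba`. -/
def Atree : ℕ → PTree NT14 AB
  | 0 => PTree.node NT14.A [PTree.leaf a]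
  | k+1 => PTree.node NT14.A [PTree.leaf a, PTree.leaf b, Atree k, PTree.leaf b, PTree.leaf a]

/-- The base of an `S`-tree: either `S → x` or `S → A` followed by an `A`-tree. -/
def base : ℕ ⊕ AB → PTree NT14 AB
  | Sum.inr x => PTree.node NT14.S [PTree.leaf x]
  | Sum.inl k => PTree.node NT14.S [Atree k]

def Schain : List AB → PTree NT14 AB → PTree NT14 AB
  | [], t => t
  | x :: u, t => PTree.node NT14.S [PTree.leaf x, Schain u t, PTree.leaf x]

def mk (u : List AB) (c : ℕ ⊕ AB) : PTree NT14 AB := Schain u (base c)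

lemma toSymbol_Atree (k : ℕ) : (Atree k).toSymbol = Sum.inl NT14.A := by
  cases k <;> rfl

lemma toSymbol_base (c : ℕ ⊕ AB) : (base c).toSymbol = Sum.inl NT14.S := by
  cases c <;> rfl

lemma toSymbol_mk (u : List AB) (c : ℕ ⊕ AB) : (mk u c).toSymbol = Sum.inl NT14.S := by
  cases u with
  | nil => exact toSymbol_base c
  | cons x u => rfl

lemma flatten_replicate_succ (k : ℕ) (l : List AB) :
    (List.replicate (k+1) l).flatten = l ++ (List.replicate k l).flatten := by
  simp [List.replicate_succ]

lemma flatten_replicate_succ' (k : ℕ) (l : List AB) :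
    (List.replicate (k+1) l).flatten = (List.replicate k l).flatten ++ l := by
  rw [List.replicate_succ']; simp

lemma centralFactor_succ (k : ℕ) :
    centralFactor (k+1) = [a, b] ++ centralFactor k ++ [b, a] := by
  unfold centralFactor
  rw [flatten_replicate_succ k [a,b], flatten_replicate_succ' k [b,a]]
  simp

lemma centralFactor_zero : centralFactor 0 = [a] := by simp [centralFactor]

lemma yield_Atree (k : ℕ) : (Atree k).yield = centralFactor k := by
  induction k with
  | zero => simp [Atree, yield_node, centralFactor, PTree.yield]
  | succ k ih => simp [Atree, yield_node, centralFactor_succ, ih, PTree.yield]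

lemma yield_mk (u : List AB) (c : ℕ ⊕ AB) :
    (mk u c).yield = u ++ (match c with
      | Sum.inr x => [x]
      | Sum.inl k => centralFactor k) ++ u.reverse := by
  induction u with
  | nil =>
    cases c with
    | inr x => simp [mk, Schain, base, yield_node, PTree.yield]
    | inl k => simp [mk, Schain, base, yield_node, yield_Atree]
  | cons y u ih =>
    simp only [mk, Schain, yield_node] at ih ⊢
    simp [PTree.yield, ih]

@[simp] lemma toSymbol_leaf (x : AB) :
    (PTree.leaf x : PTree NT14 AB).toSymbol = Sum.inr x := rfl

@[simp] lemma sign_leaf (σ : NT14 × List (NT14 ⊕ AB) → ℤ) (x : AB) :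
    (PTree.leaf x : PTree NT14 AB).sign σ = 1 := by rw [PTree.sign]

@[simp] lemma yield_leaf (x : AB) :
    (PTree.leaf x : PTree NT14 AB).yield = [x] := by rw [PTree.yield]

lemma sign_ruleA1 : G14.sign (NT14.A, [Sum.inr a, Sum.inr b, Sum.inl NT14.A, Sum.inr b, Sum.inr a]) = -1 := by
  simp [G14]

lemma sign_ruleA2 : G14.sign (NT14.A, [Sum.inr a]) = 1 := by simp [G14]

lemma sign_ruleSA : G14.sign (NT14.S, [Sum.inl NT14.A]) = -1 := by simp [G14]

lemma sign_ruleSx (x : AB) : G14.sign (NT14.S, [Sum.inr x]) = 1 := by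
  cases x <;> simp [G14]

lemma sign_ruleSxx (x : AB) : G14.sign (NT14.S, [Sum.inr x, Sum.inl NT14.S, Sum.inr x]) = 1 := by
  cases x <;> simp [G14]

lemma sign_Atree (k : ℕ) : (Atree k).sign G14.sign = (-1) ^ k := by
  induction k with
  | zero =>
    rw [Atree]; erw [sign_node]
    simp only [List.map, toSymbol_leaf]
    erw [sign_ruleA2, sign_leaf]
    simp
  | succ k ih =>
    rw [Atree]; erw [sign_node]
    simp only [List.map, toSymbol_leaf, toSymbol_Atree]
    erw [sign_ruleA1, List.prod_cons, List.prod_cons, List.prod_cons, List.prod_cons,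
      List.prod_cons, ih, sign_leaf, sign_leaf]
    simp [pow_succ]

lemma sign_base (c : ℕ ⊕ AB) :
    (base c).sign G14.sign = (match c with
      | Sum.inr _ => 1
      | Sum.inl k => (-1) ^ (k+1)) := by
  cases c with
  | inr x =>
    rw [base]; erw [sign_node]
    simp only [List.map, toSymbol_leaf]
    erw [sign_ruleSx, sign_leaf]
    simp
  | inl k =>
    rw [base]; erw [sign_node]
    simp only [List.map, toSymbol_Atree]
    erw [sign_ruleSA, List.prod_cons, sign_Atree]
    simp [pow_succ]

lemma sign_mk (u : List AB) (c : ℕ ⊕ AB) :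
    (mk u c).sign G14.sign = (match c with
      | Sum.inr _ => 1
      | Sum.inl k => (-1) ^ (k+1)) := by
  induction u with
  | nil => exact sign_base c
  | cons y u ih =>
    rw [← ih]
    show (PTree.node NT14.S [PTree.leaf y, mk u c, PTree.leaf y]).sign G14.sign = _
    erw [sign_node]
    simp only [List.map, toSymbol_leaf, toSymbol_mk]
    erw [sign_ruleSxx, sign_leaf]
    simp
    rfl

lemma mem_rules_SA : (NT14.S, [Sum.inl NT14.A]) ∈ G14.rules := by
  show ((NT14.S, [Sum.inl NT14.A]) : NT14 × List (NT14 ⊕ AB)) ∈ ({_, _, _, _, _, _, _} : Set (NT14 × List (NT14 ⊕ AB))); simp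

lemma mem_rules_Sx (x : AB) : (NT14.S, [Sum.inr x]) ∈ G14.rules := by
  show ((NT14.S, [Sum.inr x]) : NT14 × List (NT14 ⊕ AB)) ∈ ({_, _, _, _, _, _, _} : Set (NT14 × List (NT14 ⊕ AB))); cases x <;> simp

lemma mem_rules_Sxx (x : AB) :
    (NT14.S, [Sum.inr x, Sum.inl NT14.S, Sum.inr x]) ∈ G14.rules := by
  show ((NT14.S, [Sum.inr x, Sum.inl NT14.S, Sum.inr x]) : NT14 × List (NT14 ⊕ AB)) ∈ ({_, _, _, _, _, _, _} : Set (NT14 × List (NT14 ⊕ AB))); cases x <;> simp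

lemma mem_rules_A1 :
    (NT14.A, [Sum.inr a, Sum.inr b, Sum.inl NT14.A, Sum.inr b, Sum.inr a]) ∈ G14.rules := by
  show ((NT14.A, [Sum.inr a, Sum.inr b, Sum.inl NT14.A, Sum.inr b, Sum.inr a]) : NT14 × List (NT14 ⊕ AB)) ∈ ({_, _, _, _, _, _, _} : Set (NT14 × List (NT14 ⊕ AB))); simp

lemma mem_rules_A2 : (NT14.A, [Sum.inr a]) ∈ G14.rules := by
  show ((NT14.A, [Sum.inr a]) : NT14 × List (NT14 ⊕ AB)) ∈ ({_, _, _, _, _, _, _} : Set (NT14 × List (NT14 ⊕ AB))); simp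

lemma valid_Atree (k : ℕ) : PTree.Valid G14.rules (Atree k) := by
  show PTree.Valid (N := NT14) G14.rules (Atree k)
  induction k with
  | zero =>
    rw [Atree]
    refine PTree.Valid.node _ _ ?_ ?_
    · exact mem_rules_A2
    · rintro c hc
      simp at hc
      subst hc
      exact PTree.Valid.leaf a
  | succ k ih =>
    rw [Atree]
    refine PTree.Valid.node _ _ ?_ ?_
    · have e : List.map PTree.toSymbol
          [PTree.leaf a, PTree.leaf b, Atree k, PTree.leaf b, PTree.leaf a]
          = [Sum.inr a, Sum.inr b, Sum.inl NT14.A, Sum.inr b, Sum.inr a] := by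
        simp [toSymbol_Atree]
      rw [e]; exact mem_rules_A1
    · rintro c hc
      simp at hc
      rcases hc with rfl | rfl | rfl | rfl | rfl
      · exact PTree.Valid.leaf a
      · exact PTree.Valid.leaf b
      · exact ih
      · exact PTree.Valid.leaf b
      · exact PTree.Valid.leaf a

lemma valid_mk (u : List AB) (c : ℕ ⊕ AB) : PTree.Valid G14.rules (mk u c) := by
  show PTree.Valid (N := NT14) G14.rules (mk u c)
  induction u with
  | nil =>
    cases c with
    | inr x =>
      refine PTree.Valid.node _ _ ?_ ?_
      · have e : List.map PTree.toSymbol [(PTree.leaf x : PTree NT14 AB)] = [Sum.inr x] := by simp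
        rw [e]; exact mem_rules_Sx x
      · rintro t ht
        simp at ht
        subst ht
        exact PTree.Valid.leaf x
    | inl k =>
      refine PTree.Valid.node _ _ ?_ ?_
      · have e : List.map PTree.toSymbol [Atree k] = [Sum.inl NT14.A] := by
          simp [toSymbol_Atree]
        rw [e]; exact mem_rules_SA
      · rintro t ht
        simp at ht
        subst ht
        exact valid_Atree k
  | cons y u ih =>
    show PTree.Valid (N := NT14) G14.rules (PTree.node NT14.S [PTree.leaf y, mk u c, PTree.leaf y])
    refine PTree.Valid.node _ _ ?_ ?_
    · have e : List.map PTree.toSymbol [PTree.leaf y, mk u c, PTree.leaf y]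
          = [Sum.inr y, Sum.inl NT14.S, Sum.inr y] := by
        simp [toSymbol_mk]
      rw [e]; exact mem_rules_Sxx y
    · rintro t ht
      simp at ht
      rcases ht with rfl | rfl | rfl
      · exact PTree.Valid.leaf y
      · exact ih
      · exact PTree.Valid.leaf y

lemma Atree_inj : Function.Injective Atree := by
  intro k k' h
  induction k generalizing k' with
  | zero => cases k' with
    | zero => rfl
    | succ k' => rw [Atree, Atree] at h; simp at h
  | succ k ih =>
    cases k' with
    | zero => rw [Atree, Atree] at h; simp at h
    | succ k' =>
      rw [Atree, Atree] at h
      simp at h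
      exact congrArg Nat.succ (ih h)

lemma Atree_ne_leaf (k : ℕ) (x : AB) : Atree k ≠ PTree.leaf x := by
  cases k <;> rw [Atree] <;> simp

lemma mk_inj (u u' : List AB) (c c' : ℕ ⊕ AB) (h : mk u c = mk u' c') :
    u = u' ∧ c = c' := by
  induction u generalizing u' with
  | nil =>
    cases u' with
    | nil =>
      refine ⟨rfl, ?_⟩
      rcases c with k | x <;> rcases c' with k' | x' <;>
        simp only [mk, Schain, base] at h <;> simp at h
      · exact congrArg Sum.inl (Atree_inj h)
      · exact absurd h (Atree_ne_leaf _ _)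
      · exact absurd h.symm (Atree_ne_leaf _ _)
      · exact congrArg Sum.inr h
    | cons y' u' =>
      exfalso
      rcases c with k | x <;> simp only [mk, Schain, base] at h <;> simp at h
  | cons y u ih =>
    cases u' with
    | nil =>
      exfalso
      rcases c' with k | x <;> simp only [mk, Schain, base] at h <;> simp at h
    | cons y' u' =>
      simp only [mk, Schain] at h
      simp at h
      obtain ⟨rfl, h2, -⟩ := h
      obtain ⟨rfl, rfl⟩ := ih u' h2
      exact ⟨rfl, rfl⟩

lemma eq_leaf_of_toSymbol {c : PTree NT14 AB} {x : AB}
    (h : c.toSymbol = Sum.inr x) : c = PTree.leaf x := by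
  cases c with
  | leaf t => simp [PTree.toSymbol] at h; rw [h]
  | node X cs => simp [PTree.toSymbol] at h

lemma classify (t : PTree NT14 AB) (h : PTree.Valid G14.rules t) :
    (t.toSymbol = Sum.inl NT14.S → ∃ u c, t = mk u c) ∧
    (t.toSymbol = Sum.inl NT14.A → ∃ k, t = Atree k) := by
  induction h with
  | leaf x => constructor <;> intro hs <;> simp [PTree.toSymbol] at hs
  | node X cs hmem hvalid ih =>
    have hmem' : (X, cs.map PTree.toSymbol) ∈
        ({(NT14.S, [Sum.inr a, Sum.inl NT14.S, Sum.inr a]),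
          (NT14.S, [Sum.inr b, Sum.inl NT14.S, Sum.inr b]),
          (NT14.S, [Sum.inr a]),
          (NT14.S, [Sum.inr b]),
          (NT14.S, [Sum.inl NT14.A]),
          (NT14.A, [Sum.inr a, Sum.inr b, Sum.inl NT14.A, Sum.inr b, Sum.inr a]),
          (NT14.A, [Sum.inr a])} : Set (NT14 × List (NT14 ⊕ AB))) := hmem
    simp only [Set.mem_insert_iff, Set.mem_singleton_iff, Prod.mk.injEq] at hmem'
    have symS : (PTree.node X cs).toSymbol = Sum.inl X := rfl
    rcases hmem' with ⟨rfl, hcs⟩ | ⟨rfl, hcs⟩ | ⟨rfl, hcs⟩ | ⟨rfl, hcs⟩ | ⟨rfl, hcs⟩ |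
      ⟨rfl, hcs⟩ | ⟨rfl, hcs⟩
    -- S → aSa
    · rcases cs with _ | ⟨c1, _ | ⟨c2, _ | ⟨c3, _ | cs⟩⟩⟩ <;> simp at hcs
      obtain ⟨h1, h2, h3⟩ := hcs
      obtain rfl := eq_leaf_of_toSymbol h1
      obtain rfl := eq_leaf_of_toSymbol h3
      obtain ⟨u, c, rfl⟩ := (ih c2 (by simp)).1 h2
      exact ⟨fun _ => ⟨a :: u, c, rfl⟩, fun hA => by simp [symS] at hA⟩
    -- S → bSb
    · rcases cs with _ | ⟨c1, _ | ⟨c2, _ | ⟨c3, _ | cs⟩⟩⟩ <;> simp at hcs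
      obtain ⟨h1, h2, h3⟩ := hcs
      obtain rfl := eq_leaf_of_toSymbol h1
      obtain rfl := eq_leaf_of_toSymbol h3
      obtain ⟨u, c, rfl⟩ := (ih c2 (by simp)).1 h2
      exact ⟨fun _ => ⟨b :: u, c, rfl⟩, fun hA => by simp [symS] at hA⟩
    -- S → a
    · rcases cs with _ | ⟨c1, _ | cs⟩ <;> simp at hcs
      obtain rfl := eq_leaf_of_toSymbol hcs
      exact ⟨fun _ => ⟨[], Sum.inr a, rfl⟩, fun hA => by simp [symS] at hA⟩
    -- S → b
    · rcases cs with _ | ⟨c1, _ | cs⟩ <;> simp at hcs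
      obtain rfl := eq_leaf_of_toSymbol hcs
      exact ⟨fun _ => ⟨[], Sum.inr b, rfl⟩, fun hA => by simp [symS] at hA⟩
    -- S → A
    · rcases cs with _ | ⟨c1, _ | cs⟩ <;> simp at hcs
      obtain ⟨k, rfl⟩ := (ih c1 (by simp)).2 hcs
      exact ⟨fun _ => ⟨[], Sum.inl k, rfl⟩, fun hA => by simp [symS] at hA⟩
    -- A → abAba
    · rcases cs with _ | ⟨c1, _ | ⟨c2, _ | ⟨c3, _ | ⟨c4, _ | ⟨c5, _ | cs⟩⟩⟩⟩⟩ <;> simp at hcs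
      obtain ⟨h1, h2, h3, h4, h5⟩ := hcs
      obtain rfl := eq_leaf_of_toSymbol h1
      obtain rfl := eq_leaf_of_toSymbol h2
      obtain rfl := eq_leaf_of_toSymbol h4
      obtain rfl := eq_leaf_of_toSymbol h5
      obtain ⟨k, rfl⟩ := (ih c3 (by simp)).2 h3
      exact ⟨fun hS => by simp [symS] at hS, fun _ => ⟨k + 1, rfl⟩⟩
    -- A → a
    · rcases cs with _ | ⟨c1, _ | cs⟩ <;> simp at hcs
      obtain rfl := eq_leaf_of_toSymbol hcs
      exact ⟨fun hS => by simp [symS] at hS, fun _ => ⟨0, rfl⟩⟩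

lemma parseTree_iff (t : PTree NT14 AB) :
    G14.IsParseTree t ↔ ∃ u c, t = mk u c := by
  constructor
  · rintro ⟨hv, hs⟩
    exact (classify t hv).1 hs
  · rintro ⟨u, c, rfl⟩
    exact ⟨valid_mk u c, toSymbol_mk u c⟩

/-- The "core" word of a base. -/
def core : ℕ ⊕ AB → List AB
  | Sum.inr x => [x]
  | Sum.inl k => centralFactor k

def signBase : ℕ ⊕ AB → ℤ
  | Sum.inr _ => 1
  | Sum.inl k => (-1) ^ (k+1)

lemma yield_mk' (u : List AB) (c : ℕ ⊕ AB) :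
    (mk u c).yield = u ++ core c ++ u.reverse := by
  cases c <;> exact yield_mk u _

lemma sign_mk' (u : List AB) (c : ℕ ⊕ AB) :
    (mk u c).sign G14.sign = signBase c := by
  cases c <;> exact sign_mk u _

def Pset (w : List AB) : Set (List AB × (ℕ ⊕ AB)) :=
  {p | w = p.1 ++ core p.2 ++ p.1.reverse}

def Kset (w : List AB) : Set ℕ :=
  {k | ∃ u : List AB, w = u ++ centralFactor k ++ u.reverse}

def Xset (w : List AB) : Set AB :=
  {x | ∃ u : List AB, w = u ++ [x] ++ u.reverse}

lemma parseTreesOf_eq (w : List AB) :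
    G14.parseTreesOf w = (fun p : List AB × (ℕ ⊕ AB) => mk p.1 p.2) '' Pset w := by
  ext t
  constructor
  · rintro ⟨hpt, hy⟩
    obtain ⟨u, c, rfl⟩ := (parseTree_iff t).1 hpt
    refine ⟨(u, c), ?_, rfl⟩
    simp only [Pset, Set.mem_setOf_eq]
    rw [← hy]
    exact yield_mk' u c
  · rintro ⟨⟨u, c⟩, hp, rfl⟩
    refine ⟨(parseTree_iff _).2 ⟨u, c, rfl⟩, ?_⟩
    erw [yield_mk']
    exact hp.symm

lemma centralFactor_length (k : ℕ) : (centralFactor k).length = 4*k+1 := by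
  induction k with
  | zero => simp [centralFactor_zero]
  | succ k ih => rw [centralFactor_succ]; simp [ih]; omega

lemma core_length (c : ℕ ⊕ AB) :
    (core c).length = (match c with | Sum.inr _ => 1 | Sum.inl k => 4*k+1) := by
  cases c with
  | inr x => rfl
  | inl k => exact centralFactor_length k

lemma center_unique {w u u' m m' : List AB} (h : w = u ++ m ++ u.reverse)
    (h' : w = u' ++ m' ++ u'.reverse) (hm : m.length = m'.length) :
    u = u' ∧ m = m' := by
  have l1 := congrArg List.length h
  have l2 := congrArg List.length h'
  simp at l1 l2
  have hlen : u.length = u'.length := by omega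
  have h2 : u ++ (m ++ u.reverse) = u' ++ (m' ++ u'.reverse) := by
    rw [← List.append_assoc, ← List.append_assoc, ← h, ← h']
  obtain ⟨hu, hrest⟩ := List.append_inj h2 hlen
  exact ⟨hu, (List.append_inj hrest hm).1⟩

lemma snd_injOn (w : List AB) : Set.InjOn Prod.snd (Pset w) := by
  rintro ⟨u, c⟩ hp ⟨u', c'⟩ hq h
  simp only [Pset, Set.mem_setOf_eq] at hp hq
  simp at h
  subst h
  obtain ⟨hu, -⟩ := center_unique hp hq rfl
  simp [hu]

lemma mem_snd_image {w : List AB} {c : ℕ ⊕ AB} :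
    c ∈ Prod.snd '' Pset w ↔ ∃ u, w = u ++ core c ++ u.reverse := by
  constructor
  · rintro ⟨⟨u, c'⟩, hp, rfl⟩
    exact ⟨u, hp⟩
  · rintro ⟨u, hu⟩
    exact ⟨(u, c), hu, rfl⟩

lemma snd_image (w : List AB) :
    Prod.snd '' Pset w = (Sum.inr '' Xset w) ∪ (Sum.inl '' Kset w) := by
  ext c
  rw [mem_snd_image]
  rcases c with k | x <;> simp [Xset, Kset, core]

lemma Kset_finite (w : List AB) : (Kset w).Finite := by
  apply Set.Finite.subset (Set.finite_Iic w.length)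
  rintro k ⟨u, hu⟩
  have := congrArg List.length hu
  simp [centralFactor_length] at this
  simp only [Set.mem_Iic]
  omega

lemma count_eq (w : List AB) :
    G14.count w = (∑ᶠ x ∈ Xset w, (1:ℤ)) + ∑ᶠ k ∈ Kset w, (-1:ℤ)^(k+1) := by
  have h1 : G14.count w = ∑ᶠ t ∈ G14.parseTreesOf w, t.sign G14.sign := rfl
  rw [h1, parseTreesOf_eq]
  show (∑ᶠ t ∈ ((fun p : List AB × (ℕ ⊕ AB) => mk p.1 p.2) '' Pset w),
    PTree.sign G14.sign t) = _
  have hinj : Set.InjOn (fun p : List AB × (ℕ ⊕ AB) => mk p.1 p.2) (Pset w) := by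
    rintro ⟨u, c⟩ - ⟨u', c'⟩ - h
    obtain ⟨rfl, rfl⟩ := mk_inj u u' c c' h
    rfl
  erw [finsum_mem_image hinj]
  have h2 : ∀ p ∈ Pset w, (mk p.1 p.2).sign G14.sign = signBase p.2 :=
    fun p _ => sign_mk' p.1 p.2
  rw [finsum_mem_congr rfl h2]
  have h3 : ∑ᶠ p ∈ Pset w, signBase p.2 = ∑ᶠ c ∈ Prod.snd '' Pset w, signBase c :=
    (finsum_mem_image (snd_injOn w)).symm
  rw [h3, snd_image]
  rw [finsum_mem_union]
  · congr 1
    · rw [finsum_mem_image (fun x _ y _ h => by simpa using h)]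
      rfl
    · rw [finsum_mem_image (fun x _ y _ h => by simpa using h)]
      rfl
  · rw [Set.disjoint_iff_inter_eq_empty]
    ext c
    rcases c with k | x <;> simp
  · exact Set.Finite.image _ (Set.toFinite _)
  · exact Set.Finite.image _ (Kset_finite w)

lemma flatten_replicate_reverse (k : ℕ) :
    ((List.replicate k [a,b]).flatten).reverse = (List.replicate k [b,a]).flatten := by
  induction k with
  | zero => simp
  | succ k ih =>
    rw [flatten_replicate_succ, flatten_replicate_succ' k [b,a]]
    simp [ih]

lemma centralFactor_center (k : ℕ) :
    centralFactor k = (List.replicate k [a,b]).flatten ++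
      a :: ((List.replicate k [a,b]).flatten).reverse := by
  rw [centralFactor, flatten_replicate_reverse]
  simp

lemma Kset_center {w : List AB} {k : ℕ} (h : k ∈ Kset w) :
    ∃ u x, w = u ++ x :: u.reverse := by
  obtain ⟨u, hu⟩ := h
  refine ⟨u ++ (List.replicate k [a,b]).flatten, a, ?_⟩
  rw [hu, centralFactor_center]
  simp

lemma Kset_down {w : List AB} {k : ℕ} (h : k + 1 ∈ Kset w) : k ∈ Kset w := by
  obtain ⟨u, hu⟩ := h
  refine ⟨u ++ [a, b], ?_⟩
  rw [hu, centralFactor_succ]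
  simp

lemma Kset_of_le {w : List AB} : ∀ m k, k ≤ m → m ∈ Kset w → k ∈ Kset w := by
  intro m
  induction m with
  | zero =>
    intro k h hm
    rw [Nat.le_zero] at h
    subst h
    exact hm
  | succ m ih =>
    intro k h hm
    rcases Nat.eq_or_lt_of_le h with rfl | h
    · exact hm
    · exact ih k (Nat.lt_succ_iff.mp h) (Kset_down hm)

lemma Xset_eq {w u₀ : List AB} {x₀ : AB} (hw : w = u₀ ++ x₀ :: u₀.reverse) :
    Xset w = {x₀} := by
  have hw' : w = u₀ ++ [x₀] ++ u₀.reverse := by simp [hw]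
  ext x
  simp only [Xset, Set.mem_setOf_eq, Set.mem_singleton_iff]
  constructor
  · rintro ⟨u, hu⟩
    have := (center_unique hu hw' rfl).2
    simpa using this
  · rintro rfl
    exact ⟨u₀, hw'⟩

lemma zero_mem_Kset {w u₀ : List AB} (hw : w = u₀ ++ AB.a :: u₀.reverse) :
    0 ∈ Kset w := by
  refine ⟨u₀, ?_⟩
  rw [centralFactor_zero]
  simpa using hw

lemma Kset_center_a {w u₀ : List AB} {x₀ : AB} {k : ℕ} (hw : w = u₀ ++ x₀ :: u₀.reverse)
    (h : k ∈ Kset w) : x₀ = AB.a := by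
  have h0 := Kset_of_le k 0 (Nat.zero_le k) h
  obtain ⟨v, hv⟩ := h0
  rw [centralFactor_zero] at hv
  have : AB.a ∈ Xset w := ⟨v, hv⟩
  rw [Xset_eq hw] at this
  exact this.symm

lemma sum_neg_pow (n : ℕ) :
    (∑ k ∈ Finset.range n, (-1:ℤ)^(k+1)) = if Even n then 0 else -1 := by
  induction n with
  | zero => simp
  | succ n ih =>
    rw [Finset.sum_range_succ, ih]
    rcases Nat.even_or_odd n with h | h
    · rw [if_pos h, if_neg (by simp [Nat.even_add_one, h])]
      rw [Odd.neg_one_pow (Even.add_one h)]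
      ring
    · rw [if_neg (by simp [Nat.not_even_iff_odd.mpr h]), if_pos (Odd.add_one h)]
      rw [Even.neg_one_pow (Odd.add_one h)]
      ring

lemma admissible : G14.Admissible := by
  intro w
  rw [parseTreesOf_eq]
  apply Set.Finite.image
  apply Set.Finite.of_finite_image _ (snd_injOn w)
  rw [snd_image]
  exact (Set.Finite.image _ (Set.toFinite _)).union (Set.Finite.image _ (Kset_finite w))

def Lang : Set (List AB) :=
  {w : List AB |
    ∃ (u : List AB) (x : AB), w = u ++ x :: u.reverse ∧
      (x = b ∨
        (x = a ∧ ∃ m : ℕ, Odd m ∧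
          (∃ v : List AB, w = v ++ centralFactor m ++ v.reverse) ∧
          ¬ ∃ v : List AB, w = v ++ centralFactor (m + 1) ++ v.reverse))}

lemma master (w : List AB) :
    (w ∈ Lang ∧ G14.count w = 1) ∨ (w ∉ Lang ∧ G14.count w = 0) := by
  by_cases hP : ∃ (u : List AB) (x : AB), w = u ++ x :: u.reverse
  · obtain ⟨u₀, x₀, hw⟩ := hP
    have hXsum : ∑ᶠ x ∈ Xset w, (1:ℤ) = 1 := by
      rw [Xset_eq hw, finsum_mem_singleton]
    cases x₀ with
    | b =>
      have hK : Kset w = ∅ := by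
        ext k
        simp only [Set.mem_empty_iff_false, iff_false]
        intro hk
        exact absurd (Kset_center_a hw hk) (by simp)
      left
      constructor
      · exact ⟨u₀, b, hw, Or.inl rfl⟩
      · rw [count_eq, hXsum, hK, finsum_mem_empty]
        ring
    | a =>
      have h0 : 0 ∈ Kset w := zero_mem_Kset hw
      have hne : (Kset_finite w).toFinset.Nonempty :=
        ⟨0, (Set.Finite.mem_toFinset _).2 h0⟩
      set M := (Kset_finite w).toFinset.max' hne with hMdef
      have hMK : M ∈ Kset w :=
        (Set.Finite.mem_toFinset _).1 ((Kset_finite w).toFinset.max'_mem hne)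
      have hle : ∀ k ∈ Kset w, k ≤ M :=
        fun k hk => (Kset_finite w).toFinset.le_max' k ((Set.Finite.mem_toFinset _).2 hk)
      have hKeq : Kset w = ↑(Finset.range (M+1)) := by
        ext k
        simp only [Finset.coe_range, Set.mem_Iio, Nat.lt_succ_iff]
        exact ⟨fun hk => hle k hk, fun h => Kset_of_le M k h hMK⟩
      have hcount : G14.count w = 1 + if Even (M+1) then 0 else -1 := by
        rw [count_eq, hXsum, hKeq, finsum_mem_coe_finset, sum_neg_pow]
      have hMsucc : M + 1 ∉ Kset w := fun hc => by have := hle (M+1) hc; omega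
      rcases Nat.even_or_odd M with hM | hM
      · right
        constructor
        · rintro ⟨u, x, hw', hcond⟩
          have hw'' : w = u ++ [x] ++ u.reverse := by simpa using hw'
          have hwa : w = u₀ ++ [a] ++ u₀.reverse := by simpa using hw
          have hx : x = a := by
            have := (center_unique hw'' hwa rfl).2
            simpa using this
          rcases hcond with hxb | ⟨-, m, hmodd, hmK, hmK1⟩
          · rw [hx] at hxb; exact absurd hxb (by simp)
          · have hmK' : m ∈ Kset w := hmK
            have hmM : m ≤ M := hle m hmK'
            have : m = M := by
              rcases Nat.eq_or_lt_of_le hmM with h | h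
              · exact h
              · exact absurd (Kset_of_le M (m+1) h hMK) hmK1
            rw [this] at hmodd
            exact (Nat.not_even_iff_odd.2 hmodd) hM
        · rw [hcount, if_neg (by simp [Nat.even_add_one, hM])]
          ring
      · left
        constructor
        · exact ⟨u₀, a, hw, Or.inr ⟨rfl, M, hM, hMK, hMsucc⟩⟩
        · rw [hcount, if_pos (Odd.add_one hM)]
          ring
  · right
    constructor
    · rintro ⟨u, x, hw, -⟩
      exact hP ⟨u, x, hw⟩
    · have hX : Xset w = ∅ := by
        ext x
        simp only [Set.mem_empty_iff_false, iff_false]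
        rintro ⟨u, hu⟩
        exact hP ⟨u, x, by simpa using hu⟩
      have hK : Kset w = ∅ := by
        ext k
        simp only [Set.mem_empty_iff_false, iff_false]
        intro hk
        exact hP (Kset_center hk)
      rw [count_eq, hX, hK, finsum_mem_empty, finsum_mem_empty]
      ring

end G14proof

/-- `G14` is admissible and generates the language of exactly those odd-length
palindromes `w` over `{a, b}` (written as `w = u ++ x :: u.reverse` with central
letter `x`) such that either the central letter is `b`, or the central letter is
`a` and the largest `m ≥ 0` with `w = v ++ (ab)^m a (ba)^m ++ v.reverse` for some
`v` is odd (expressed: some odd `m` admits such a factorization while `m + 1`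
does not; the set of admissible `m` is downward closed). -/
theorem G14_generates :
    G14.Generates {w : List AB |
      ∃ (u : List AB) (x : AB), w = u ++ x :: u.reverse ∧
        (x = b ∨
          (x = a ∧ ∃ m : ℕ, Odd m ∧
            (∃ v : List AB, w = v ++ centralFactor m ++ v.reverse) ∧
            ¬ ∃ v : List AB, w = v ++ centralFactor (m + 1) ++ v.reverse))} := by
  refine ⟨G14proof.admissible, ?_, ?_⟩
  · intro w hw
    rcases G14proof.master w with ⟨-, hc⟩ | ⟨hn, -⟩
    · exact hc
    · exact absurd hw hn
  · intro w hw
    rcases G14proof.master w with ⟨hm, -⟩ | ⟨-, hc⟩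
    · exact absurd hm hw
    · exact hc
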